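/- Let R = k[x_0,...,x_n] be a polynomial ring over a field k, and let I be a monomial ideal with lcm-lattice L. For each r = 1,...,height(L), fix an integer d_r ≥ max{deg σ : σ ∈ L, height σ = r}, and choose for each σ ∈ L a monomial σ̄ with deg σ̄ = d_{height σ} and with the same radical (same support of variables) as σ. Define g_r = Σ_{σ ∈ L, height σ = r} σ̄. Then the radical of the ideal (g_1,...,g_{height L}) equals the radical of I. -/

import Mathlib

open MvPolynomial

noncomputable section

abbrev Mon (n : ℕ) : Type := Fin (n+1) →₀ ℕ

/-- total degree of a monomial exponent vector -/
def mdeg {n : ℕ} (m : Mon n) : ℕ := m.sum fun _ e => e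

/-- height of σ in a lattice L of monomials: the length of the longest chain in `[1, σ] ∩ L`
ending at σ (the bottom `1`, i.e. the zero exponent vector, belongs to `L`). -/
def heightIn {n : ℕ} (L : Set (Mon n)) (σ : Mon n) : ℕ :=
  sSup {r : ℕ | ∃ c : Fin (r+1) → Mon n, StrictMono c ∧ (∀ i, c i ∈ L ∧ c i ≤ σ) ∧
    c (Fin.last r) = σ}

/-- height of L: length of the longest chain in L -/
def latHeight {n : ℕ} (L : Set (Mon n)) : ℕ :=
  sSup {r : ℕ | ∃ c : Fin (r+1) → Mon n, StrictMono c ∧ ∀ i, c i ∈ L}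

/-- the lcm lattice of a set of monomials: all lcms (pointwise sups) of subsets,
including the bottom element `1` (the empty lcm). -/
def lcmLattice {n : ℕ} (G : Finset (Mon n)) : Finset (Mon n) :=
  G.powerset.image fun F => F.sup id

/-- the monomial ideal generated by a finite set of exponent vectors -/
def monIdeal {n : ℕ} (k : Type) [Field k] (G : Finset (Mon n)) :
    Ideal (MvPolynomial (Fin (n+1)) k) :=
  Ideal.span ((fun m => (monomial m (1:k))) '' ↑G)

namespace Stmt0Aux

variable {n : ℕ}

lemma support_add (a b : Mon n) : (a + b).support = a.support ∪ b.support := by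
  ext i
  simp only [Finsupp.mem_support_iff, Finset.mem_union, Finsupp.add_apply]
  omega

lemma support_sup' (a b : Mon n) : (a ⊔ b).support = a.support ∪ b.support :=
  Finsupp.support_sup a b

lemma coeff_le_mdeg (b : Mon n) (i : Fin (n+1)) : b i ≤ mdeg b := by
  by_cases h : b i = 0
  · simp [h]
  · exact Finset.single_le_sum (f := fun j => b j) (fun _ _ => Nat.zero_le _)
      (Finsupp.mem_support_iff.mpr h)

/-- key monomial radical membership lemma -/
lemma monomial_mem_radical {k : Type} [Field k] {K : Ideal (MvPolynomial (Fin (n+1)) k)}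
    {a b : Mon n} (hb : monomial b (1:k) ∈ K) (hs : b.support ⊆ a.support) :
    monomial a (1:k) ∈ K.radical := by
  rw [Ideal.mem_radical_iff]
  refine ⟨mdeg b + 1, ?_⟩
  have hle : b ≤ (mdeg b + 1) • a := by
    rw [Finsupp.le_def]
    intro i
    by_cases h : b i = 0
    · simp [h]
    · have hai : 1 ≤ a i := by
        have : i ∈ a.support := hs (Finsupp.mem_support_iff.mpr h)
        have := Finsupp.mem_support_iff.mp this
        omega
      have h1 : b i ≤ mdeg b := coeff_le_mdeg b i
      calc b i ≤ (mdeg b + 1) * 1 := by omega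
        _ ≤ (mdeg b + 1) * a i := by exact Nat.mul_le_mul_left _ hai
        _ = ((mdeg b + 1) • a) i := by simp [Finsupp.smul_apply]
  rw [monomial_pow, one_pow]
  have heq : (mdeg b + 1) • a = b + ((mdeg b + 1) • a - b) := (add_tsub_cancel_of_le hle).symm
  rw [heq, ← one_mul (1:k), ← monomial_mul]
  exact Ideal.mul_mem_right _ K hb

/-- boundedness of the chain sets -/
lemma bddAbove_heightSet (L : Finset (Mon n)) (σ : Mon n) :
    BddAbove {r : ℕ | ∃ c : Fin (r+1) → Mon n, StrictMono c ∧
      (∀ i, c i ∈ (L : Set (Mon n)) ∧ c i ≤ σ) ∧ c (Fin.last r) = σ} := by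
  refine ⟨L.card, ?_⟩
  rintro r ⟨c, hc, hm, -⟩
  have h1 : (Finset.univ : Finset (Fin (r+1))).card ≤ L.card :=
    Finset.card_le_card_of_injOn c (fun a _ => (hm a).1) hc.injective.injOn
  simp only [Finset.card_univ, Fintype.card_fin] at h1
  omega

lemma bddAbove_latSet (L : Finset (Mon n)) :
    BddAbove {r : ℕ | ∃ c : Fin (r+1) → Mon n, StrictMono c ∧ ∀ i, c i ∈ (L : Set (Mon n))} := by
  refine ⟨L.card, ?_⟩
  rintro r ⟨c, hc, hm⟩
  have h1 : (Finset.univ : Finset (Fin (r+1))).card ≤ L.card :=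
    Finset.card_le_card_of_injOn c (fun a _ => hm a) hc.injective.injOn
  simp only [Finset.card_univ, Fintype.card_fin] at h1
  omega

lemma strictMono_fin_one {α : Type*} [Preorder α] (f : Fin (0+1) → α) : StrictMono f := by
  intro i j hij
  have hi := i.isLt
  have hj := j.isLt
  rw [Fin.lt_def] at hij
  omega

lemma exists_chain {L : Finset (Mon n)} {σ : Mon n} (hσ : σ ∈ L) :
    ∃ c : Fin (heightIn (L : Set (Mon n)) σ + 1) → Mon n, StrictMono c ∧
      (∀ i, c i ∈ (L : Set (Mon n)) ∧ c i ≤ σ) ∧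
      c (Fin.last (heightIn (L : Set (Mon n)) σ)) = σ :=
  Nat.sSup_mem (s := {r : ℕ | ∃ c : Fin (r+1) → Mon n, StrictMono c ∧
      (∀ i, c i ∈ (L : Set (Mon n)) ∧ c i ≤ σ) ∧ c (Fin.last r) = σ})
    ⟨0, ⟨fun _ => σ, strictMono_fin_one _, fun _ => ⟨hσ, le_rfl⟩, rfl⟩⟩
    (bddAbove_heightSet L σ)

lemma le_heightIn {L : Finset (Mon n)} {σ : Mon n} {r : ℕ}
    (c : Fin (r+1) → Mon n) (hc : StrictMono c) (hm : ∀ i, c i ∈ L ∧ c i ≤ σ)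
    (hl : c (Fin.last r) = σ) : r ≤ heightIn (L : Set (Mon n)) σ :=
  le_csSup (bddAbove_heightSet L σ) ⟨c, hc, fun i => ⟨(hm i).1, (hm i).2⟩, hl⟩

lemma heightIn_le_latHeight {L : Finset (Mon n)} {σ : Mon n} (hσ : σ ∈ L) :
    heightIn (L : Set (Mon n)) σ ≤ latHeight (L : Set (Mon n)) := by
  apply csSup_le_csSup (bddAbove_latSet L)
  · exact ⟨0, ⟨fun _ => σ, strictMono_fin_one _, fun _ => ⟨hσ, le_rfl⟩, rfl⟩⟩
  · rintro r ⟨c, hc, hm, -⟩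
    exact ⟨c, hc, fun i => (hm i).1⟩

lemma chain_extend {L : Finset (Mon n)} {σ τ : Mon n} {r : ℕ}
    (c : Fin (r+1) → Mon n) (hc : StrictMono c) (hm : ∀ i, c i ∈ L ∧ c i ≤ σ)
    (hl : c (Fin.last r) = σ) (hτ : τ ∈ L) (hst : σ < τ) :
    r + 1 ≤ heightIn (L : Set (Mon n)) τ := by
  apply le_heightIn (c := fun i : Fin (r+1+1) =>
    if hi : (i : ℕ) < r + 1 then c ⟨i, hi⟩ else τ)
  · intro i j hij
    have hij' : (i : ℕ) < (j : ℕ) := hij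
    have hi2 := i.isLt
    have hj2 := j.isLt
    by_cases hi : (i : ℕ) < r + 1
    · by_cases hj : (j : ℕ) < r + 1
      · simp only [dif_pos hi, dif_pos hj]
        exact hc (show ((⟨(i:ℕ), hi⟩ : Fin (r+1)) < ⟨(j:ℕ), hj⟩) from hij')
      · simp only [dif_pos hi, dif_neg hj]
        exact lt_of_le_of_lt (hm ⟨(i:ℕ), hi⟩).2 hst
    · omega
  · intro i
    by_cases hi : (i : ℕ) < r + 1
    · simp only [dif_pos hi]
      exact ⟨(hm _).1, le_trans (hm _).2 (le_of_lt hst)⟩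
    · simp only [dif_neg hi]
      exact ⟨hτ, le_rfl⟩
  · simp [Fin.last]

lemma heightIn_lt {L : Finset (Mon n)} {σ τ : Mon n} (hσ : σ ∈ L) (hτ : τ ∈ L) (hst : σ < τ) :
    heightIn (L : Set (Mon n)) σ < heightIn (L : Set (Mon n)) τ := by
  obtain ⟨c, hc, hm, hl⟩ := exists_chain hσ
  have := chain_extend c hc hm hl hτ hst
  omega

lemma heightIn_zero (L : Set (Mon n)) : heightIn L 0 = 0 := by
  have hsub : {r : ℕ | ∃ c : Fin (r+1) → Mon n, StrictMono c ∧ (∀ i, c i ∈ L ∧ c i ≤ 0) ∧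
      c (Fin.last r) = 0} ⊆ {0} := by
    rintro r ⟨c, hc, hm, hl⟩
    simp only [Set.mem_singleton_iff]
    by_contra hr
    have h0 : (0 : Fin (r+1)) < Fin.last r := by
      rw [Fin.lt_def]
      simp [Fin.last]
      omega
    have h1 : c 0 < c (Fin.last r) := hc h0
    have h2 : c 0 ≤ 0 := (hm 0).2
    rw [hl] at h1
    exact (lt_irrefl (0 : Mon n)) (lt_of_le_of_lt zero_le h1)
  rcases Set.subset_singleton_iff_eq.mp hsub with h | h
  · rw [heightIn, h, csSup_empty]; rfl
  · rw [heightIn, h, csSup_singleton]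

lemma heightIn_pos {L : Finset (Mon n)} {σ : Mon n} (h0 : (0 : Mon n) ∈ L) (hσ : σ ∈ L)
    (hne : σ ≠ 0) : 1 ≤ heightIn (L : Set (Mon n)) σ := by
  have h01 : (0 : Mon n) < σ := pos_iff_ne_zero.mpr hne
  have := heightIn_lt h0 hσ h01
  omega

lemma zero_mem_lcmLattice (G : Finset (Mon n)) : (0 : Mon n) ∈ lcmLattice G := by
  classical
  rw [lcmLattice, Finset.mem_image]
  refine ⟨∅, Finset.empty_mem_powerset G, ?_⟩
  rw [Finset.sup_empty]
  rfl

lemma mem_lcmLattice_of_mem {G : Finset (Mon n)} {f : Mon n} (hf : f ∈ G) :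
    f ∈ lcmLattice G := by
  classical
  rw [lcmLattice, Finset.mem_image]
  exact ⟨{f}, Finset.singleton_subset_iff.mpr hf |> Finset.mem_powerset.mpr, Finset.sup_singleton⟩

lemma sup_mem_lcmLattice {G : Finset (Mon n)} {σ τ : Mon n} (hσ : σ ∈ lcmLattice G)
    (hτ : τ ∈ lcmLattice G) : σ ⊔ τ ∈ lcmLattice G := by
  classical
  rw [lcmLattice, Finset.mem_image] at *
  obtain ⟨F, hF, rfl⟩ := hσ
  obtain ⟨F', hF', rfl⟩ := hτ
  refine ⟨F ∪ F', ?_, Finset.sup_union⟩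
  rw [Finset.mem_powerset] at *
  exact Finset.union_subset hF hF'

lemma exists_gen {G : Finset (Mon n)} {σ : Mon n} (hσ : σ ∈ lcmLattice G) (h0 : σ ≠ 0) :
    ∃ f ∈ G, f ≤ σ := by
  classical
  rw [lcmLattice, Finset.mem_image] at hσ
  obtain ⟨F, hF, rfl⟩ := hσ
  rcases Finset.eq_empty_or_nonempty F with h | ⟨f, hf⟩
  · subst h
    rw [Finset.sup_empty] at h0
    exact absurd rfl h0
  · exact ⟨f, Finset.mem_powerset.mp hF hf, Finset.le_sup (f := id) hf⟩

end Stmt0Aux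

open Stmt0Aux in

theorem stmt0 {n : ℕ} (k : Type) [Field k]
    (G : Finset (Mon n)) (hG0 : ∀ g ∈ G, g ≠ 0)
    (hGmin : ∀ g ∈ G, ∀ g' ∈ G, g ≤ g' → g = g')
    (I : Ideal (MvPolynomial (Fin (n+1)) k)) (hI : I = monIdeal k G)
    (L : Finset (Mon n)) (hL : L = lcmLattice G)
    (d : ℕ → ℕ)
    (hd : ∀ r, 1 ≤ r → r ≤ latHeight (L : Set (Mon n)) →
      ∀ σ ∈ L, heightIn (L : Set (Mon n)) σ = r → mdeg σ ≤ d r)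
    (bar : Mon n → Mon n)
    (hbar : ∀ σ ∈ L, mdeg (bar σ) = d (heightIn (L : Set (Mon n)) σ) ∧
      (bar σ).support = σ.support)
    (g : ℕ → MvPolynomial (Fin (n+1)) k)
    (hg : ∀ r, g r = ∑ σ ∈ L.filter (fun σ => heightIn (L : Set (Mon n)) σ = r),
      monomial (bar σ) (1:k)) :
    (Ideal.span (g '' (Set.Icc 1 (latHeight (L : Set (Mon n)))))).radical = I.radical := by
  classical
  have h0L : (0 : Mon n) ∈ L := by rw [hL]; exact Stmt0Aux.zero_mem_lcmLattice G
  have hGL : ∀ f ∈ G, f ∈ L := by intro f hf; rw [hL]; exact Stmt0Aux.mem_lcmLattice_of_mem hf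
  have hsupL : ∀ σ ∈ L, ∀ τ ∈ L, σ ⊔ τ ∈ L := by
    intro σ hσ τ hτ
    rw [hL] at *
    exact Stmt0Aux.sup_mem_lcmLattice hσ hτ
  have hgen : ∀ σ ∈ L, σ ≠ 0 → ∃ f ∈ G, f ≤ σ := by
    intro σ hσ h0
    rw [hL] at hσ
    exact Stmt0Aux.exists_gen hσ h0
  set J := Ideal.span (g '' (Set.Icc 1 (latHeight (L : Set (Mon n))))) with hJ
  -- the main claim, by downward induction on height
  have claim : ∀ t : ℕ, ∀ σ ∈ L, σ ≠ 0 →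
      latHeight (L : Set (Mon n)) - heightIn (L : Set (Mon n)) σ = t →
      monomial (bar σ) (1:k) ∈ J.radical := by
    intro t
    induction t using Nat.strong_induction_on with
    | _ t ih =>
      intro σ hσ hσ0 ht
      have hr1 : 1 ≤ heightIn (L : Set (Mon n)) σ := Stmt0Aux.heightIn_pos h0L hσ hσ0
      have hrh : heightIn (L : Set (Mon n)) σ ≤ latHeight (L : Set (Mon n)) :=
        Stmt0Aux.heightIn_le_latHeight hσ
      have hgr : g (heightIn (L : Set (Mon n)) σ) ∈ J :=
        Ideal.subset_span ⟨heightIn (L : Set (Mon n)) σ, ⟨hr1, hrh⟩, rfl⟩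
      have cross : ∀ τ ∈ L, heightIn (L : Set (Mon n)) τ = heightIn (L : Set (Mon n)) σ →
          τ ≠ σ → monomial (bar σ + bar τ) (1:k) ∈ J.radical := by
        intro τ hτ hτr hne
        have hsup : σ ⊔ τ ∈ L := hsupL σ hσ τ hτ
        have hlt : σ < σ ⊔ τ := by
          refine lt_of_le_of_ne le_sup_left ?_
          intro hEq
          have hτσ : τ ≤ σ := by rw [hEq]; exact le_sup_right
          have h2 : τ < σ := lt_of_le_of_ne hτσ hne
          have := Stmt0Aux.heightIn_lt hτ hσ h2
          omega
        have hhlt : heightIn (L : Set (Mon n)) σ < heightIn (L : Set (Mon n)) (σ ⊔ τ) :=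
          Stmt0Aux.heightIn_lt hσ hsup hlt
        have hhle : heightIn (L : Set (Mon n)) (σ ⊔ τ) ≤ latHeight (L : Set (Mon n)) :=
          Stmt0Aux.heightIn_le_latHeight hsup
        have hne0 : σ ⊔ τ ≠ 0 := by
          intro hEq
          apply hσ0
          have h3 : σ ≤ 0 := hEq ▸ le_sup_left
          exact le_antisymm h3 zero_le
        have hmem := ih (latHeight (L : Set (Mon n)) - heightIn (L : Set (Mon n)) (σ ⊔ τ))
          (by omega) (σ ⊔ τ) hsup hne0 rfl
        have hsupp : (bar (σ ⊔ τ)).support ⊆ (bar σ + bar τ).support := by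
          rw [Stmt0Aux.support_add, (hbar σ hσ).2, (hbar τ hτ).2, (hbar _ hsup).2,
            Stmt0Aux.support_sup']
        have h4 := Stmt0Aux.monomial_mem_radical hmem hsupp
        rwa [Ideal.radical_idem] at h4
      have expand : monomial (bar σ) (1:k) * g (heightIn (L : Set (Mon n)) σ)
          = ∑ τ ∈ L.filter (fun τ => heightIn (L : Set (Mon n)) τ = heightIn (L : Set (Mon n)) σ),
            monomial (bar σ + bar τ) (1:k) := by
        rw [hg (heightIn (L : Set (Mon n)) σ), Finset.mul_sum]
        refine Finset.sum_congr rfl fun τ _ => ?_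
        rw [monomial_mul, one_mul]
      have hσf : σ ∈ L.filter
          (fun τ => heightIn (L : Set (Mon n)) τ = heightIn (L : Set (Mon n)) σ) :=
        Finset.mem_filter.mpr ⟨hσ, rfl⟩
      rw [← Finset.add_sum_erase _ _ hσf] at expand
      have hmul : monomial (bar σ) (1:k) * g (heightIn (L : Set (Mon n)) σ) ∈ J.radical :=
        Ideal.mul_mem_left _ _ (Ideal.le_radical hgr)
      have hsum : ∑ τ ∈ (L.filter
            (fun τ => heightIn (L : Set (Mon n)) τ = heightIn (L : Set (Mon n)) σ)).erase σ,
          monomial (bar σ + bar τ) (1:k) ∈ J.radical := by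
        refine Ideal.sum_mem _ fun τ hτ => ?_
        have h1 := Finset.mem_of_mem_erase hτ
        have h2 := Finset.ne_of_mem_erase hτ
        exact cross τ (Finset.mem_filter.mp h1).1 (Finset.mem_filter.mp h1).2 h2
      have hsq : monomial (bar σ + bar σ) (1:k) ∈ J.radical := by
        have heq : monomial (bar σ + bar σ) (1:k)
            = monomial (bar σ) (1:k) * g (heightIn (L : Set (Mon n)) σ)
              - ∑ τ ∈ (L.filter (fun τ => heightIn (L : Set (Mon n)) τ
                  = heightIn (L : Set (Mon n)) σ)).erase σ,
                monomial (bar σ + bar τ) (1:k) := by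
          rw [expand]; ring
        rw [heq]
        exact Ideal.sub_mem _ hmul hsum
      refine Ideal.mem_radical_of_pow_mem (m := 2) ?_
      have hpow : (monomial (bar σ) (1:k)) ^ 2 = monomial (bar σ + bar σ) (1:k) := by
        rw [monomial_pow, one_pow, two_smul]
      rw [hpow]
      exact hsq
  apply le_antisymm
  · rw [Ideal.radical_le_radical_iff, Ideal.span_le]
    rintro x ⟨rr, ⟨hrr1, hrr2⟩, rfl⟩
    rw [SetLike.mem_coe, hg rr]
    refine Ideal.sum_mem _ fun σ hσm => ?_
    obtain ⟨hσL, hσr⟩ := Finset.mem_filter.mp hσm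
    have hσ0 : σ ≠ 0 := by
      intro h
      rw [h, Stmt0Aux.heightIn_zero] at hσr
      omega
    obtain ⟨f, hf, hfle⟩ := hgen σ hσL hσ0
    have hfI : monomial f (1:k) ∈ I := by
      rw [hI, monIdeal]
      exact Ideal.subset_span ⟨f, by simpa using hf, rfl⟩
    refine Stmt0Aux.monomial_mem_radical hfI ?_
    rw [(hbar σ hσL).2]
    exact Finsupp.support_mono hfle
  · rw [Ideal.radical_le_radical_iff, hI, monIdeal, Ideal.span_le]
    rintro x ⟨f, hf, rfl⟩
    simp only [Finset.mem_coe] at hf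
    have hfL : f ∈ L := hGL f hf
    have hf0 : f ≠ 0 := hG0 f hf
    have h1 := claim _ f hfL hf0 rfl
    have hsupp : (bar f).support ⊆ f.support := by rw [(hbar f hfL).2]
    have h2 := Stmt0Aux.monomial_mem_radical h1 hsupp
    rwa [Ideal.radical_idem] at h2
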